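/- Let p, r be positive integers, and let A, Â be p × r real matrices and H an r × r real matrix such that Â^⊤Â = p I_r. Suppose ‖(1/p) A^⊤A − I_r‖_F ≤ ε and (1/√p)‖Â − A H‖_F ≤ δ with ‖H‖_F ≤ C. Then ‖H^⊤H − I_r‖_F ≤ 2Cδ(1 + ε + Cδ/2) + C²ε + δ² + 2δ√(1+ε); in particular H^⊤H → I_r when ε, δ → 0 with C bounded. -/

import Mathlib

open Matrix BigOperators

/-- Frobenius norm. -/
noncomputable def frobNorm {m n : Type*} [Fintype m] [Fintype n] (M : Matrix m n ℝ) : ℝ :=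
  Real.sqrt (∑ i, ∑ j, (M i j) ^ 2)

attribute [local instance] Matrix.frobeniusSeminormedAddCommGroup Matrix.frobeniusIsBoundedSMul
  Matrix.frobeniusNormSMulClass

private lemma frobNorm_eq' {m n : Type*} [Fintype m] [Fintype n] (M : Matrix m n ℝ) :
    frobNorm M = ‖M‖ := by
  rw [frobNorm, Matrix.frobenius_norm_def, ← Real.sqrt_eq_rpow]
  congr 1
  refine Finset.sum_congr rfl fun i _ => Finset.sum_congr rfl fun j _ => ?_
  rw [show (2:ℝ) = ((2:ℕ):ℝ) by norm_num, Real.rpow_natCast, Real.norm_eq_abs, sq_abs]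

private lemma frob_sq_trace' {m n : Type*} [Fintype m] [Fintype n] (M : Matrix m n ℝ) :
    ‖M‖ ^ 2 = Matrix.trace (Mᵀ * M) := by
  rw [← frobNorm_eq', frobNorm, Real.sq_sqrt (by positivity)]
  rw [Matrix.trace]
  simp only [Matrix.diag, Matrix.mul_apply, Matrix.transpose_apply, sq]
  exact Finset.sum_comm

private lemma key_bound' {p r q : ℕ} (hp : 0 < p) (Ahat : Matrix (Fin p) (Fin r) ℝ)
    (hhat : Ahatᵀ * Ahat = (p : ℝ) • (1 : Matrix (Fin r) (Fin r) ℝ))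
    (E : Matrix (Fin p) (Fin q) ℝ) :
    ‖Ahatᵀ * E‖ ^ 2 ≤ (p : ℝ) * ‖E‖ ^ 2 := by
  have hid : ‖((p : ℝ) • E - Ahat * (Ahatᵀ * E))‖ ^ 2
      = (p : ℝ) * ((p : ℝ) * ‖E‖ ^ 2 - ‖Ahatᵀ * E‖ ^ 2) := by
    simp only [frob_sq_trace']
    rw [Matrix.transpose_sub, Matrix.transpose_smul, Matrix.transpose_mul, Matrix.transpose_mul]
    simp only [Matrix.sub_mul, Matrix.mul_sub, Matrix.smul_mul, Matrix.mul_smul,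
      Matrix.trace_sub, Matrix.trace_smul, smul_eq_mul, mul_sub, Matrix.transpose_transpose,
      Matrix.mul_assoc]
    have h1 : Eᵀ * (Ahat * (Ahatᵀ * (Ahat * (Ahatᵀ * E)))) = (p:ℝ) • (Eᵀ * (Ahat * (Ahatᵀ * E))) := by
      calc Eᵀ * (Ahat * (Ahatᵀ * (Ahat * (Ahatᵀ * E))))
          = Eᵀ * Ahat * ((Ahatᵀ * Ahat) * (Ahatᵀ * E)) := by simp only [Matrix.mul_assoc]
        _ = (p:ℝ) • (Eᵀ * (Ahat * (Ahatᵀ * E))) := by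
            rw [hhat, Matrix.smul_mul, Matrix.one_mul, Matrix.mul_smul, Matrix.mul_assoc]
    have h2 : Eᵀ * (Ahat * (Ahatᵀ * E)) = (Ahatᵀ * E)ᵀ * (Ahatᵀ * E) := by
      rw [Matrix.transpose_mul, Matrix.transpose_transpose, Matrix.mul_assoc]
    rw [h1, Matrix.trace_smul, smul_eq_mul, h2]
    ring
  have hpos : (0:ℝ) < p := by exact_mod_cast hp
  have h0 := sq_nonneg ‖((p : ℝ) • E - Ahat * (Ahatᵀ * E))‖
  rw [hid] at h0
  nlinarith [h0, hpos]

theorem stmt13 (p r : ℕ) (hp : 0 < p)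
    (A Ahat : Matrix (Fin p) (Fin r) ℝ)
    (H : Matrix (Fin r) (Fin r) ℝ) (ε δ C : ℝ)
    (hhat : Ahatᵀ * Ahat = (p : ℝ) • (1 : Matrix (Fin r) (Fin r) ℝ))
    (hε : frobNorm ((1 / (p : ℝ)) • (Aᵀ * A) - 1) ≤ ε)
    (hδ : (1 / Real.sqrt p) * frobNorm (Ahat - A * H) ≤ δ)
    (hH : frobNorm H ≤ C) :
    frobNorm (Hᵀ * H - 1) ≤
      2 * C * δ * (1 + ε + C * δ / 2) + C ^ 2 * ε + δ ^ 2 + 2 * δ * Real.sqrt (1 + ε) := by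
  set E : Matrix (Fin p) (Fin r) ℝ := Ahat - A * H with hE
  set M1 : Matrix (Fin r) (Fin r) ℝ := (1 / (p : ℝ)) • (Aᵀ * A) - 1 with hM1
  have hp' : (p:ℝ) ≠ 0 := by positivity
  have hpos : (0:ℝ) < p := by exact_mod_cast hp
  have hsp : (0:ℝ) < Real.sqrt p := Real.sqrt_pos.mpr hpos
  -- rephrase hypotheses with norms
  rw [frobNorm_eq'] at hε hδ hH ⊢
  have hδ0 : 0 ≤ δ := le_trans (by positivity) hδ
  have hε0 : 0 ≤ ε := le_trans (norm_nonneg _) hε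
  have hC0 : 0 ≤ C := le_trans (norm_nonneg _) hH
  have hnE : ‖E‖ ≤ Real.sqrt p * δ := by
    have h := mul_le_mul_of_nonneg_left hδ hsp.le
    rw [show Real.sqrt p * (1 / Real.sqrt p * ‖E‖) = ‖E‖ by field_simp] at h
    exact h
  -- key algebraic identity
  have hA : Aᵀ * A = (p:ℝ) • M1 + (p:ℝ) • (1 : Matrix (Fin r) (Fin r) ℝ) := by
    rw [hM1, smul_sub, smul_smul, mul_one_div, div_self hp', one_smul]
    abel
  have key : (p:ℝ) • (Hᵀ * H - 1) =
      -((p:ℝ) • (Hᵀ * M1 * H)) - Ahatᵀ * E - Eᵀ * Ahat + Eᵀ * E := by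
    have h1 : Eᵀ * E = (p:ℝ)•(1:Matrix (Fin r) (Fin r) ℝ) - Ahatᵀ*(A*H) - (A*H)ᵀ*Ahat
        + ((p:ℝ) • (Hᵀ * M1 * H) + (p:ℝ) • (Hᵀ * H)) := by
      rw [hE, Matrix.transpose_sub, Matrix.sub_mul, Matrix.mul_sub, Matrix.mul_sub, hhat]
      have : (A*H)ᵀ*(A*H) = (p:ℝ) • (Hᵀ * M1 * H) + (p:ℝ) • (Hᵀ * H) := by
        rw [Matrix.transpose_mul, show Hᵀ * Aᵀ * (A * H) = Hᵀ * (Aᵀ * A) * H by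
          simp only [Matrix.mul_assoc], hA]
        simp only [Matrix.mul_add, Matrix.add_mul, Matrix.mul_smul, Matrix.smul_mul,
          Matrix.mul_one]
      rw [this]; abel
    have h2 : Ahatᵀ * E = (p:ℝ)•(1:Matrix (Fin r) (Fin r) ℝ) - Ahatᵀ*(A*H) := by
      rw [hE, Matrix.mul_sub, hhat]
    have h3 : Eᵀ * Ahat = (p:ℝ)•(1:Matrix (Fin r) (Fin r) ℝ) - (A*H)ᵀ*Ahat := by
      rw [hE, Matrix.transpose_sub, Matrix.sub_mul, hhat]
    rw [h1, h2, h3, smul_sub]; abel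
  -- norm bounds for each piece
  have b1 : ‖Hᵀ * M1 * H‖ ≤ C * ε * C := by
    calc ‖Hᵀ * M1 * H‖ ≤ ‖Hᵀ * M1‖ * ‖H‖ := Matrix.frobenius_norm_mul _ _
      _ ≤ (‖Hᵀ‖ * ‖M1‖) * ‖H‖ :=
          mul_le_mul_of_nonneg_right (Matrix.frobenius_norm_mul _ _) (norm_nonneg _)
      _ = (‖H‖ * ‖M1‖) * ‖H‖ := by rw [Matrix.frobenius_norm_transpose]
      _ ≤ C * ε * C := by
          apply mul_le_mul _ hH (norm_nonneg _) (by positivity)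
          exact mul_le_mul hH hε (norm_nonneg _) hC0
  have b2 : ‖Ahatᵀ * E‖ ≤ (p:ℝ) * δ := by
    have hk := key_bound' hp Ahat hhat E
    have hE2 : ‖E‖ ^ 2 ≤ (Real.sqrt p * δ) ^ 2 := pow_le_pow_left₀ (norm_nonneg E) hnE 2
    have hsq : Real.sqrt p ^ 2 = (p:ℝ) := Real.sq_sqrt (le_of_lt hpos)
    have hE2' : ‖E‖ ^ 2 ≤ (p:ℝ) * δ ^ 2 := by rw [mul_pow, hsq] at hE2; exact hE2
    have h5 : ‖Ahatᵀ * E‖ ^ 2 ≤ ((p:ℝ) * δ) ^ 2 := by nlinarith [hk, hE2', hpos]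
    have h6 := Real.sqrt_le_sqrt h5
    rwa [Real.sqrt_sq (norm_nonneg _), Real.sqrt_sq (by positivity)] at h6
  have b3 : ‖Eᵀ * Ahat‖ = ‖Ahatᵀ * E‖ := by
    rw [show Eᵀ * Ahat = (Ahatᵀ * E)ᵀ by rw [Matrix.transpose_mul, Matrix.transpose_transpose],
      Matrix.frobenius_norm_transpose]
  have b4 : ‖Eᵀ * E‖ ≤ (p:ℝ) * δ ^ 2 := by
    calc ‖Eᵀ * E‖ ≤ ‖Eᵀ‖ * ‖E‖ := Matrix.frobenius_norm_mul _ _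
      _ = ‖E‖ * ‖E‖ := by rw [Matrix.frobenius_norm_transpose]
      _ ≤ (Real.sqrt p * δ) * (Real.sqrt p * δ) :=
          mul_le_mul hnE hnE (norm_nonneg _) (by positivity)
      _ = (p:ℝ) * δ ^ 2 := by
          rw [show (Real.sqrt p * δ) * (Real.sqrt p * δ) = Real.sqrt p ^2 * δ^2 by ring,
            Real.sq_sqrt (le_of_lt hpos)]
  -- combine
  have hmain : (p:ℝ) * ‖Hᵀ * H - 1‖ ≤ (p:ℝ) * (C ^ 2 * ε + 2 * δ + δ ^ 2) := by
    have : (p:ℝ) * ‖Hᵀ * H - 1‖ = ‖(p:ℝ) • (Hᵀ * H - 1)‖ := by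
      rw [norm_smul, Real.norm_eq_abs, abs_of_pos hpos]
    rw [this, key]
    calc ‖-((p:ℝ) • (Hᵀ * M1 * H)) - Ahatᵀ * E - Eᵀ * Ahat + Eᵀ * E‖
        ≤ ‖-((p:ℝ) • (Hᵀ * M1 * H)) - Ahatᵀ * E - Eᵀ * Ahat‖ + ‖Eᵀ * E‖ := norm_add_le _ _
      _ ≤ ‖-((p:ℝ) • (Hᵀ * M1 * H)) - Ahatᵀ * E‖ + ‖Eᵀ * Ahat‖ + ‖Eᵀ * E‖ := by
          linarith [norm_sub_le (-((p:ℝ) • (Hᵀ * M1 * H)) - Ahatᵀ * E) (Eᵀ * Ahat)]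
      _ ≤ ‖-((p:ℝ) • (Hᵀ * M1 * H))‖ + ‖Ahatᵀ * E‖ + ‖Eᵀ * Ahat‖ + ‖Eᵀ * E‖ := by
          linarith [norm_sub_le (-((p:ℝ) • (Hᵀ * M1 * H))) (Ahatᵀ * E)]
      _ = (p:ℝ) * ‖Hᵀ * M1 * H‖ + ‖Ahatᵀ * E‖ + ‖Ahatᵀ * E‖ + ‖Eᵀ * E‖ := by
          rw [norm_neg, norm_smul, Real.norm_eq_abs, abs_of_pos hpos, b3]
      _ ≤ (p:ℝ) * (C * ε * C) + (p:ℝ) * δ + (p:ℝ) * δ + (p:ℝ) * δ ^ 2 := by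
          have := mul_le_mul_of_nonneg_left b1 (le_of_lt hpos)
          linarith [b2, b4, this]
      _ = (p:ℝ) * (C ^ 2 * ε + 2 * δ + δ ^ 2) := by ring
  have hfin : ‖Hᵀ * H - 1‖ ≤ C ^ 2 * ε + 2 * δ + δ ^ 2 :=
    le_of_mul_le_mul_left hmain hpos
  have hsqrt1 : (1:ℝ) ≤ Real.sqrt (1 + ε) := by
    have h7 : Real.sqrt 1 ≤ Real.sqrt (1 + ε) := Real.sqrt_le_sqrt (by linarith)
    simpa using h7
  nlinarith [hfin, hsqrt1, hδ0, hε0, hC0, mul_nonneg hC0 hδ0, sq_nonneg (C*δ), mul_nonneg (mul_nonneg hC0 hδ0) hε0]
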